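/- Let K and r be positive integers with K > 3, 2 ≤ r, 2·r ≤ K, and suppose r does not divide K. Let m = K/r (as a real number), b = ⌊m⌋, and m̂ = b + 1. Then (1/(r−1))·(b² − b)/(b·m̂ − m) < (1/(r−1))·(1 − r/K). -/

import Mathlib

/-- Corollary 2: when m = K/r is not an integer, the FLCD communication load is
strictly smaller than (1/(r−1))·(1 − r/K). -/
theorem stmt_4 (K r : ℕ) (hK : 3 < K) (hr : 2 ≤ r) (hrK : 2 * r ≤ K)
    (hnd : ¬ r ∣ K) :
    (1 / ((r : ℝ) - 1)) *
        (((⌊(K : ℝ) / (r : ℝ)⌋ : ℝ) ^ 2 - (⌊(K : ℝ) / (r : ℝ)⌋ : ℝ)) /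
          ((⌊(K : ℝ) / (r : ℝ)⌋ : ℝ) * ((⌊(K : ℝ) / (r : ℝ)⌋ : ℝ) + 1) - (K : ℝ) / (r : ℝ))) <
      (1 / ((r : ℝ) - 1)) * (1 - (r : ℝ) / (K : ℝ)) := by
  have hr2 : (2:ℝ) ≤ (r:ℝ) := by exact_mod_cast hr
  have hK0 : (0:ℝ) < (K:ℝ) := by positivity
  have hr0 : (0:ℝ) < (r:ℝ) := by linarith
  set m : ℝ := (K:ℝ) / (r:ℝ) with hmdef
  set b : ℤ := ⌊m⌋ with hbdef
  have hm : m * (r:ℝ) = (K:ℝ) := by rw [hmdef, div_mul_cancel₀ _ (ne_of_gt hr0)]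
  have hm2 : (2:ℝ) ≤ m := by
    rw [hmdef, le_div_iff₀ hr0]
    have : (2:ℝ) * (r:ℝ) ≤ (K:ℝ) := by exact_mod_cast hrK
    linarith
  have hb2 : (2:ℤ) ≤ b := by
    rw [hbdef]
    exact Int.le_floor.mpr (by exact_mod_cast hm2)
  have hb2' : (2:ℝ) ≤ (b:ℝ) := by exact_mod_cast hb2
  have hble : (b:ℝ) ≤ m := Int.floor_le m
  have hbne : (b:ℝ) ≠ m := by
    intro h
    apply hnd
    refine ⟨b.toNat, ?_⟩
    have hbt : ((b.toNat : ℤ) : ℝ) = (b:ℝ) := by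
      congr 1
      exact Int.toNat_of_nonneg (by linarith)
    have : (K:ℝ) = (r:ℝ) * (b.toNat : ℕ) := by
      push_cast at hbt ⊢
      rw [hbt, h]
      linarith [hm]
    exact_mod_cast this
  have hblt : (b:ℝ) < m := lt_of_le_of_ne hble hbne
  have hmlt : m < (b:ℝ) + 1 := Int.lt_floor_add_one m
  have hden : 0 < (b:ℝ) * ((b:ℝ) + 1) - m := by nlinarith
  have hcoef : 0 < 1 / ((r:ℝ) - 1) := by
    apply div_pos one_pos; linarith
  apply mul_lt_mul_of_pos_left _ hcoef
  have h1 : 1 - (r:ℝ)/(K:ℝ) = (m - 1) / m := by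
    rw [eq_div_iff (by linarith : m ≠ 0)]
    field_simp
    nlinarith [hm]
  rw [h1, div_lt_div_iff₀ hden (by linarith : (0:ℝ) < m)]
  nlinarith [mul_pos (sub_pos.mpr hblt) (by linarith : (0:ℝ) < (b:ℝ) + 1 - m)]
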